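/- Let (W, r_1, …, r_n) be a Strip Packing instance whose rectangles are listed in the FQW-ordering with Q ≠ ∅, and consider its BL packing. Then for every rectangle r ∈ Q it holds that h_r ≤ h_{r_B}. -/

import Mathlib

open scoped Classical
open MeasureTheory

/-- An axis-parallel rectangle, given by its width and its height. -/
structure Rect where
  w : ℝ
  h : ℝ

/-- A Strip Packing instance: a strip of width `W > 0` and `n` rectangles
`r 0, …, r (n-1)`, each with positive height and width at most `W`. -/
structure SPInstance (n : ℕ) where
  W : ℝ
  r : Fin n → Rect
  W_pos : 0 < W
  w_pos : ∀ i, 0 < (r i).w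
  w_le_W : ∀ i, (r i).w ≤ W
  h_pos : ∀ i, 0 < (r i).h

/-- The open box of rectangle `R` placed at position `p`. -/
def openBox (R : Rect) (p : ℝ × ℝ) : Set (ℝ × ℝ) :=
  Set.Ioo p.1 (p.1 + R.w) ×ˢ Set.Ioo p.2 (p.2 + R.h)

/-- The closed box of rectangle `R` placed at position `p`. -/
def closedBox (R : Rect) (p : ℝ × ℝ) : Set (ℝ × ℝ) :=
  Set.Icc p.1 (p.1 + R.w) ×ˢ Set.Icc p.2 (p.2 + R.h)

namespace SPInstance

variable {n : ℕ}

/-- Rectangle `i` placed at `p` lies inside the strip. -/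
def InStrip (I : SPInstance n) (i : Fin n) (p : ℝ × ℝ) : Prop :=
  0 ≤ p.1 ∧ p.1 + (I.r i).w ≤ I.W ∧ 0 ≤ p.2

/-- `pos` is a feasible packing: each rectangle lies in the strip and the open
boxes are pairwise disjoint. -/
def Feasible (I : SPInstance n) (pos : Fin n → ℝ × ℝ) : Prop :=
  (∀ i, I.InStrip i (pos i)) ∧
    Pairwise (fun i j : Fin n =>
      Disjoint (openBox (I.r i) (pos i)) (openBox (I.r j) (pos j)))

/-- The height of a packing, `max_i (y_i + h_i)`. -/
noncomputable def height (I : SPInstance n) (pos : Fin n → ℝ × ℝ) : ℝ :=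
  ⨆ i, ((pos i).2 + (I.r i).h)

/-- The minimum height of a feasible packing. -/
noncomputable def hOPT (I : SPInstance n) : ℝ :=
  sInf {H | ∃ pos, I.Feasible pos ∧ I.height pos = H}

/-- The maximum height of a rectangle of the instance. -/
noncomputable def hmax (I : SPInstance n) : ℝ :=
  ⨆ i, (I.r i).h

/-- Rectangle `i` can feasibly be placed at `p`, given the rectangles
`j < i` already placed at `pos j`. -/
def FeasibleAt (I : SPInstance n) (pos : Fin n → ℝ × ℝ) (i : Fin n) (p : ℝ × ℝ) : Prop :=
  I.InStrip i p ∧ ∀ j : Fin n, j < i →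
    Disjoint (openBox (I.r i) p) (openBox (I.r j) (pos j))

/-- `pos` is the Bottom-Left packing for the ordering `r 0, r 1, …`: every
rectangle is feasibly placed, at the lexicographically minimal `(y, x)`. -/
def IsBL (I : SPInstance n) (pos : Fin n → ℝ × ℝ) : Prop :=
  ∀ i : Fin n, I.FeasibleAt pos i (pos i) ∧
    ∀ p : ℝ × ℝ, I.FeasibleAt pos i p →
      (pos i).2 < p.2 ∨ ((pos i).2 = p.2 ∧ (pos i).1 ≤ p.1)

/-- Greedy construction of the set `F` of the FQW-partition, processing the
rectangles in the order `σ 0, σ 1, …` and adding a rectangle whenever the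
total width of `F` stays at most `W`. -/
noncomputable def greedyF (I : SPInstance n) (σ : Equiv.Perm (Fin n)) : Finset (Fin n) :=
  (List.finRange n).foldl
    (fun F k =>
      if (I.r (σ k)).w + ∑ f ∈ F, (I.r f).w ≤ I.W then insert (σ k) F else F) ∅

end SPInstance

/-- An FQW-partition datum: a processing order `σ` of the rectangles that is
sorted by decreasing height. -/
structure FQW {n : ℕ} (I : SPInstance n) where
  σ : Equiv.Perm (Fin n)
  sorted : ∀ k k' : Fin n, k ≤ k' → (I.r (σ k')).h ≤ (I.r (σ k)).h

namespace FQW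

variable {n : ℕ} {I : SPInstance n}

/-- The set `F` of the FQW-partition. -/
noncomputable def F (d : FQW I) : Finset (Fin n) := I.greedyF d.σ

/-- The set `𝒲` of the FQW-partition: rectangles not in `F` of width
greater than `W/2`. -/
noncomputable def Wset (d : FQW I) : Finset (Fin n) :=
  Finset.univ.filter fun i => i ∉ d.F ∧ I.W / 2 < (I.r i).w

/-- The set `Q` of the FQW-partition: all remaining rectangles. -/
noncomputable def Q (d : FQW I) : Finset (Fin n) :=
  Finset.univ.filter fun i => i ∉ d.F ∧ ¬ I.W / 2 < (I.r i).w

/-- The rectangles of the instance are listed in the FQW-ordering: first `F`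
sorted by decreasing height, then `Q` sorted by decreasing width, then `𝒲`. -/
def IsOrdered (d : FQW I) : Prop :=
  (∀ i : Fin n, i ∈ d.F ↔ (i : ℕ) < d.F.card) ∧
  (∀ i : Fin n, i ∈ d.Q ↔ d.F.card ≤ (i : ℕ) ∧ (i : ℕ) < d.F.card + d.Q.card) ∧
  (∀ i j : Fin n, (i : ℕ) ≤ (j : ℕ) → (j : ℕ) < d.F.card → (I.r j).h ≤ (I.r i).h) ∧
  (∀ i j : Fin n, d.F.card ≤ (i : ℕ) → (i : ℕ) ≤ (j : ℕ) →
    (j : ℕ) < d.F.card + d.Q.card → (I.r j).w ≤ (I.r i).w)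

end FQW

/-- `max {y_{r_1}, …, y_{r_i}}` (the first `i` rectangles, `0` if `i = 0`):
the lower boundary of the region `H_{i+1}` of the horizontal strip partition. -/
noncomputable def maxYBelow {n : ℕ} (pos : Fin n → ℝ × ℝ) (i : ℕ) : ℝ :=
  ⨆ j : {j : Fin n // (j : ℕ) < i}, (pos (j : Fin n)).2

namespace SPInstance

variable {n : ℕ}

/-- The horizontal line at height `t` is proper: it meets no top or
bottom face of a rectangle. -/
def ProperLine (I : SPInstance n) (pos : Fin n → ℝ × ℝ) (t : ℝ) : Prop :=
  ∀ j : Fin n, t ≠ (pos j).2 ∧ t ≠ (pos j).2 + (I.r j).h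

/-- Rectangle `j` intersects the horizontal line at height `t`. -/
def Intersects (I : SPInstance n) (pos : Fin n → ℝ × ℝ) (j : Fin n) (t : ℝ) : Prop :=
  (pos j).2 < t ∧ t < (pos j).2 + (I.r j).h

/-- The occupied part of the horizontal line at height `t`. -/
noncomputable def occupied (I : SPInstance n) (pos : Fin n → ℝ × ℝ) (t : ℝ) : Set ℝ :=
  ⋃ j ∈ {j : Fin n | I.Intersects pos j t}, Set.Icc (pos j).1 ((pos j).1 + (I.r j).w)

/-- The occupied fraction of the horizontal line at height `t`. -/
noncomputable def occFrac (I : SPInstance n) (pos : Fin n → ℝ × ℝ) (t : ℝ) : ℝ :=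
  (volume (I.occupied pos t)).toReal / I.W

/-- The region `H_{i+1}` (for the `0`-based index `i`) of the horizontal strip
partition: `[0, W] × [max {y_{r_1}, …, y_{r_i}}, y_{r_{i+1}})`. -/
def regionH (I : SPInstance n) (pos : Fin n → ℝ × ℝ) (i : Fin n) : Set (ℝ × ℝ) :=
  Set.Icc 0 I.W ×ˢ Set.Ico (maxYBelow pos (i : ℕ)) (pos i).2

/-- `G` is an unoccupied gap of the horizontal line at height `t`: a maximal
subinterval of `[0, W]` disjoint from the occupied part of the line. -/
def IsGap (I : SPInstance n) (pos : Fin n → ℝ × ℝ) (t : ℝ) (G : Set ℝ) : Prop :=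
  G.Nonempty ∧ G ⊆ Set.Icc 0 I.W ∧ G.OrdConnected ∧ Disjoint G (I.occupied pos t) ∧
    ∀ G' : Set ℝ, G'.OrdConnected → G' ⊆ Set.Icc 0 I.W →
      Disjoint G' (I.occupied pos t) → G ⊆ G' → G' = G

/-- `j` is a left supporter of `i`: it comes before `i` in the ordering, its
right face touches the left face of `i`, and their open `y`-ranges intersect. -/
def IsLeftSupporter (I : SPInstance n) (pos : Fin n → ℝ × ℝ) (i j : Fin n) : Prop :=
  j < i ∧ (pos j).1 + (I.r j).w = (pos i).1 ∧
    (pos j).2 < (pos i).2 + (I.r i).h ∧ (pos i).2 < (pos j).2 + (I.r j).h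

/-- `j` is a bottom supporter of `i`: it comes before `i` in the ordering, its
top face touches the bottom face of `i`, and their open `x`-ranges intersect. -/
def IsBottomSupporter (I : SPInstance n) (pos : Fin n → ℝ × ℝ) (i j : Fin n) : Prop :=
  j < i ∧ (pos j).2 + (I.r j).h = (pos i).2 ∧
    (pos j).1 < (pos i).1 + (I.r i).w ∧ (pos i).1 < (pos j).1 + (I.r j).w

/-- `j` is the leftmost bottom supporter of `i`. -/
def IsLeftmostBottomSupporter (I : SPInstance n) (pos : Fin n → ℝ × ℝ)
    (i j : Fin n) : Prop :=
  I.IsBottomSupporter pos i j ∧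
    ∀ j' : Fin n, I.IsBottomSupporter pos i j' → (pos j).1 ≤ (pos j').1

end SPInstance

/-- `iT` is the top rectangle `r_T` of `Q`: the rectangle of `Q` whose top face
is highest, ties broken by highest bottom face. -/
def IsTopRect {n : ℕ} (I : SPInstance n) (d : FQW I) (pos : Fin n → ℝ × ℝ)
    (iT : Fin n) : Prop :=
  iT ∈ d.Q ∧ ∀ j ∈ d.Q,
    (pos j).2 + (I.r j).h < (pos iT).2 + (I.r iT).h ∨
    ((pos j).2 + (I.r j).h = (pos iT).2 + (I.r iT).h ∧ (pos j).2 ≤ (pos iT).2)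

/-- `iL` is the left rectangle `r_L` of `Q`: the first rectangle of `Q` in the
ordering touching the left strip boundary, and `r_T` if there is none. -/
def IsLeftRect {n : ℕ} (I : SPInstance n) (d : FQW I) (pos : Fin n → ℝ × ℝ)
    (iT iL : Fin n) : Prop :=
  (iL ∈ d.Q ∧ (pos iL).1 = 0 ∧ ∀ j ∈ d.Q, (pos j).1 = 0 → iL ≤ j) ∨
  ((∀ j ∈ d.Q, (pos j).1 ≠ 0) ∧ iL = iT)

/-- The region `H' = [0, W] × ([0, h_{r_T}] ∪ [y_{r_T}, y_{r_T} + h_{r_T}])`. -/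
def Hprime {n : ℕ} (I : SPInstance n) (pos : Fin n → ℝ × ℝ) (iT : Fin n) :
    Set (ℝ × ℝ) :=
  Set.Icc 0 I.W ×ˢ
    (Set.Icc 0 (I.r iT).h ∪ Set.Icc (pos iT).2 ((pos iT).2 + (I.r iT).h))

/-- The type `T(ℓ)` of the proper horizontal line at height `t`: the rectangles
of `Q` intersecting the line whose index is smaller than the least index `j`
with `y_{r_j} > t` (equivalently, all rectangles with index at most theirs have
bottom face at height at most `t`). -/
noncomputable def TypeOf {n : ℕ} (I : SPInstance n) (d : FQW I)
    (pos : Fin n → ℝ × ℝ) (t : ℝ) : Finset (Fin n) :=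
  Finset.univ.filter fun i =>
    i ∈ d.Q ∧ I.Intersects pos i t ∧ ∀ j : Fin n, j ≤ i → (pos j).2 ≤ t

/-- `i` is `LM(ℓ)`: the rectangle of `T(ℓ)` with smallest `x`-coordinate. -/
def IsLM {n : ℕ} (I : SPInstance n) (d : FQW I) (pos : Fin n → ℝ × ℝ) (t : ℝ)
    (i : Fin n) : Prop :=
  i ∈ TypeOf I d pos t ∧ ∀ j ∈ TypeOf I d pos t, (pos i).1 ≤ (pos j).1

/-- The horizontal line at height `t` lies in `H_{a+2} ∪ ⋯ ∪ H_L`, where `iL`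
is the `0`-based index of `r_L` (so `L = iL + 1`, `1`-based). -/
def LineInHUnion {n : ℕ} (I : SPInstance n) (d : FQW I) (pos : Fin n → ℝ × ℝ)
    (iL : Fin n) (t : ℝ) : Prop :=
  ∃ m : Fin n, d.F.card + 1 ≤ (m : ℕ) ∧ m ≤ iL ∧
    maxYBelow pos (m : ℕ) ≤ t ∧ t < (pos m).2

/-- The space `H_{a+2} ∪ ⋯ ∪ H_L`, where `iL` is the `0`-based index of `r_L`. -/
def regionHUnion {n : ℕ} (I : SPInstance n) (d : FQW I) (pos : Fin n → ℝ × ℝ)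
    (iL : Fin n) : Set (ℝ × ℝ) :=
  ⋃ m ∈ {m : Fin n | d.F.card + 1 ≤ (m : ℕ) ∧ m ≤ iL}, I.regionH pos m

/-- The horizontal line at height `t` belongs to `L^k`: it is a proper line of
order `k` lying in `H_{a+2} ∪ ⋯ ∪ H_L`. -/
def InLk {n : ℕ} (I : SPInstance n) (d : FQW I) (pos : Fin n → ℝ × ℝ)
    (iL : Fin n) (k : ℕ) (t : ℝ) : Prop :=
  I.ProperLine pos t ∧ LineInHUnion I d pos iL t ∧ (TypeOf I d pos t).card = k

/-- `i` belongs to `R^k`: it is `LM(ℓ)` for some line `ℓ ∈ L^k`. -/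
def InRk {n : ℕ} (I : SPInstance n) (d : FQW I) (pos : Fin n → ℝ × ℝ)
    (iL : Fin n) (k : ℕ) (i : Fin n) : Prop :=
  ∃ t : ℝ, InLk I d pos iL k t ∧ IsLM I d pos t i

/-- `i` is `LM^k`: the rectangle of `R^k` with smallest `x`-coordinate,
ties broken by largest `y`-coordinate. -/
def IsLMk {n : ℕ} (I : SPInstance n) (d : FQW I) (pos : Fin n → ℝ × ℝ)
    (iL : Fin n) (k : ℕ) (i : Fin n) : Prop :=
  InRk I d pos iL k i ∧ ∀ j : Fin n, InRk I d pos iL k j →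
    (pos i).1 < (pos j).1 ∨ ((pos i).1 = (pos j).1 ∧ (pos j).2 ≤ (pos i).2)

/-- `v = x_F^ℓ` for the line `ℓ` at height `t`: the right face `x + w` of the
rightmost rectangle of `F` intersecting `ℓ`, and `0` if there is none. -/
def IsXF {n : ℕ} (I : SPInstance n) (d : FQW I) (pos : Fin n → ℝ × ℝ)
    (t v : ℝ) : Prop :=
  ((∃ f ∈ d.F, I.Intersects pos f t ∧ v = (pos f).1 + (I.r f).w) ∧
    ∀ f ∈ d.F, I.Intersects pos f t → (pos f).1 + (I.r f).w ≤ v) ∨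
  ((∀ f ∈ d.F, ¬ I.Intersects pos f t) ∧ v = 0)



section Helpers

variable {n : ℕ}

private noncomputable def gstep (I : SPInstance n) (σ : Equiv.Perm (Fin n)) :
    Finset (Fin n) → Fin n → Finset (Fin n) :=
  fun F k => if (I.r (σ k)).w + ∑ f ∈ F, (I.r f).w ≤ I.W then insert (σ k) F else F

private lemma greedyF_eq_foldl (I : SPInstance n) (σ : Equiv.Perm (Fin n)) :
    I.greedyF σ = (List.finRange n).foldl (gstep I σ) ∅ := rfl

private lemma subset_gstep (I : SPInstance n) (σ : Equiv.Perm (Fin n))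
    (A : Finset (Fin n)) (k : Fin n) : A ⊆ gstep I σ A k := by
  unfold gstep
  split_ifs
  · exact Finset.subset_insert _ _
  · exact subset_rfl

private lemma subset_foldl_gstep (I : SPInstance n) (σ : Equiv.Perm (Fin n)) :
    ∀ (l : List (Fin n)) (A : Finset (Fin n)), A ⊆ l.foldl (gstep I σ) A := by
  intro l
  induction l with
  | nil => intro A; exact subset_rfl
  | cons k l ih => intro A; exact (subset_gstep I σ A k).trans (ih _)

private lemma sum_foldl_gstep_le (I : SPInstance n) (σ : Equiv.Perm (Fin n)) :
    ∀ (l : List (Fin n)) (A : Finset (Fin n)),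
      (∑ f ∈ A, (I.r f).w) ≤ I.W →
      (∑ f ∈ l.foldl (gstep I σ) A, (I.r f).w) ≤ I.W := by
  intro l
  induction l with
  | nil => intro A h; exact h
  | cons k l ih =>
    intro A h
    apply ih
    unfold gstep
    split_ifs with hc
    · by_cases hm : σ k ∈ A
      · rwa [Finset.insert_eq_self.mpr hm]
      · rw [Finset.sum_insert hm]; exact hc
    · exact h

private lemma mem_foldl_gstep (I : SPInstance n) (σ : Equiv.Perm (Fin n)) :
    ∀ (l : List (Fin n)) (A : Finset (Fin n)) (f : Fin n),
      f ∈ l.foldl (gstep I σ) A → f ∈ A ∨ ∃ k ∈ l, f = σ k := by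
  intro l
  induction l with
  | nil => intro A f hf; exact Or.inl hf
  | cons k l ih =>
    intro A f hf
    rcases ih _ f hf with h | ⟨k', hk', rfl⟩
    · unfold gstep at h
      split_ifs at h with hc
      · rcases Finset.mem_insert.mp h with h | h
        · exact Or.inr ⟨k, List.mem_cons_self, h⟩
        · exact Or.inl h
      · exact Or.inl h
    · exact Or.inr ⟨k', List.mem_cons_of_mem _ hk', rfl⟩

private lemma greedy_sum_le (I : SPInstance n) (σ : Equiv.Perm (Fin n)) :
    (∑ f ∈ I.greedyF σ, (I.r f).w) ≤ I.W := by
  rw [greedyF_eq_foldl]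
  apply sum_foldl_gstep_le
  simpa using I.W_pos.le

private lemma greedy_reject (I : SPInstance n) (σ : Equiv.Perm (Fin n))
    (hsorted : ∀ k k' : Fin n, k ≤ k' → (I.r (σ k')).h ≤ (I.r (σ k)).h)
    (q : Fin n) (hq : q ∉ I.greedyF σ) :
    ∃ P : Finset (Fin n), P ⊆ I.greedyF σ ∧
      (∀ f ∈ P, (I.r q).h ≤ (I.r f).h) ∧
      I.W < (I.r q).w + ∑ f ∈ P, (I.r f).w := by
  classical
  set kq : Fin n := σ.symm q with hkq
  obtain ⟨l₁, l₂, hdec⟩ := List.append_of_mem (List.mem_finRange kq)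
  set P : Finset (Fin n) := l₁.foldl (gstep I σ) ∅ with hP
  have hσkq : σ kq = q := Equiv.apply_symm_apply σ q
  have hfull : I.greedyF σ = l₂.foldl (gstep I σ) (gstep I σ P kq) := by
    rw [greedyF_eq_foldl, hdec, List.foldl_append, List.foldl_cons]
  have hPsub : P ⊆ I.greedyF σ := by
    rw [hfull]
    exact (subset_gstep I σ P kq).trans (subset_foldl_gstep I σ l₂ _)
  refine ⟨P, hPsub, ?_, ?_⟩
  · intro f hf
    rcases mem_foldl_gstep I σ l₁ ∅ f hf with h | ⟨k, hk, rfl⟩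
    · simp at h
    · have hpair := List.pairwise_lt_finRange n
      rw [hdec, List.pairwise_append] at hpair
      have hklt : k < kq := hpair.2.2 k hk kq (List.mem_cons_self)
      have := hsorted k kq hklt.le
      rwa [hσkq] at this
  · by_contra hle
    push_neg at hle
    have hstep : gstep I σ P kq = insert q P := by
      unfold gstep
      rw [hσkq, if_pos hle]
    have : q ∈ I.greedyF σ := by
      rw [hfull, hstep]
      exact subset_foldl_gstep I σ l₂ _ (Finset.mem_insert_self _ _)
    exact hq this

end Helpers

/-- **Lemma.** Every rectangle of `Q` has height at most `h_{r_B}`, where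
`r_B` is the leftmost bottom supporter of the first rectangle of `Q`
(0-based index `ia` with `(ia : ℕ) = |F| = a`). -/
theorem Q_height_le_bottom_supporter {n : ℕ} (I : SPInstance n) (d : FQW I)
    (hord : d.IsOrdered) (pos : Fin n → ℝ × ℝ) (hBL : I.IsBL pos)
    (hQ : d.Q.Nonempty) (ia : Fin n) (hia : (ia : ℕ) = d.F.card)
    (iB : Fin n) (hiB : I.IsLeftmostBottomSupporter pos ia iB)
    (i : Fin n) (hi : i ∈ d.Q) :
    (I.r i).h ≤ (I.r iB).h := by
  classical
  obtain ⟨hO1, hO2, hO3, hO4⟩ := hord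
  set a := d.F.card with ha
  -- the partial-sum function
  set C : ℕ → ℝ := fun m =>
    ∑ j ∈ Finset.univ.filter (fun j : Fin n => (j : ℕ) < m), (I.r j).w with hC
  have Cnonneg : ∀ m, 0 ≤ C m := fun m =>
    Finset.sum_nonneg fun j _ => (I.w_pos j).le
  have Cmono : ∀ {m m' : ℕ}, m ≤ m' → C m ≤ C m' := by
    intro m m' hmm
    apply Finset.sum_le_sum_of_subset_of_nonneg
    · intro j hj
      simp only [Finset.mem_filter, Finset.mem_univ, true_and] at hj ⊢
      omega
    · intro j _ _; exact (I.w_pos j).le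
  have C0 : C 0 = 0 := by simp [hC]
  have Csucc : ∀ k : Fin n, C ((k : ℕ) + 1) = C (k : ℕ) + (I.r k).w := by
    intro k
    have hins : Finset.univ.filter (fun j : Fin n => (j : ℕ) < (k : ℕ) + 1)
        = insert k (Finset.univ.filter (fun j : Fin n => (j : ℕ) < (k : ℕ))) := by
      ext j
      simp only [Finset.mem_filter, Finset.mem_univ, true_and, Finset.mem_insert]
      constructor
      · intro hj
        rcases Nat.lt_succ_iff_lt_or_eq.mp hj with h | h
        · exact Or.inr h
        · exact Or.inl (Fin.ext h)
      · rintro (rfl | h)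
        · omega
        · omega
    have hk : k ∉ Finset.univ.filter (fun j : Fin n => (j : ℕ) < (k : ℕ)) := by
      simp
    simp only [hC]
    rw [hins, Finset.sum_insert hk]
    ring
  have CaF : C a = ∑ f ∈ d.F, (I.r f).w := by
    apply Finset.sum_congr _ (fun _ _ => rfl)
    ext j
    simp only [Finset.mem_filter, Finset.mem_univ, true_and]
    exact (hO1 j).symm
  have CaW : C a ≤ I.W := by
    rw [CaF]
    exact greedy_sum_le I d.σ
  have haln : a < n := hia ▸ ia.isLt
  -- every rectangle of F is placed on the floor at (C k, 0)
  have hfloor : ∀ m : ℕ, ∀ k : Fin n, (k : ℕ) = m → (k : ℕ) < a →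
      pos k = (C (k : ℕ), 0) := by
    intro m
    induction m using Nat.strong_induction_on with
    | _ m ih =>
      intro k hkm hka
      subst hkm
      have hCk1 : C ((k : ℕ) + 1) ≤ I.W := le_trans (Cmono (by omega)) CaW
      have hfeas : I.FeasibleAt pos k (C (k : ℕ), 0) := by
        refine ⟨⟨Cnonneg _, ?_, le_refl 0⟩, ?_⟩
        · have := Csucc k; simpa [this] using hCk1
        · intro j hj
          have hj' : (j : ℕ) < (k : ℕ) := hj
          have hjpos := ih (j : ℕ) hj' j rfl (by omega)
          rw [hjpos]
          rw [Set.disjoint_left]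
          rintro ⟨x, y⟩ hx hx'
          have h1 : C (k : ℕ) < x := hx.1.1
          have h2 : x < C (j : ℕ) + (I.r j).w := hx'.1.2
          have h3 : C ((j : ℕ) + 1) ≤ C (k : ℕ) := Cmono (by omega)
          rw [Csucc j] at h3
          linarith
      have hmin := (hBL k).2 _ hfeas
      have hstrip := (hBL k).1.1
      have hy : (pos k).2 = 0 := by
        rcases hmin with h | h
        · exfalso; have := hstrip.2.2; simp at h; linarith
        · exact h.1
      have hxle : (pos k).1 ≤ C (k : ℕ) := by
        rcases hmin with h | h
        · exfalso; have := hstrip.2.2; simp at h; linarith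
        · exact h.2
      have hxge : C (k : ℕ) ≤ (pos k).1 := by
        by_contra hlt
        push_neg at hlt
        set x := (pos k).1 with hxdef
        have hx0 : 0 ≤ x := hstrip.1
        set j := Nat.findGreatest (fun m => C m ≤ x) (k : ℕ) with hj
        have hPj : C j ≤ x :=
          Nat.findGreatest_spec (P := fun m => C m ≤ x) (Nat.zero_le _)
            (show C 0 ≤ x by rw [C0]; exact hx0)
        have hjk : j ≤ (k : ℕ) := Nat.findGreatest_le _
        have hjne : j ≠ (k : ℕ) := by
          intro h; rw [h] at hPj; exact absurd hPj (not_le.mpr hlt)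
        have hjlt : j < (k : ℕ) := lt_of_le_of_ne hjk hjne
        have hnot : ¬ C (j + 1) ≤ x :=
          Nat.findGreatest_is_greatest (P := fun m => C m ≤ x) (n := (k : ℕ))
            (Nat.lt_succ_of_le le_rfl) (by omega)
        push_neg at hnot
        have hjn : j < n := by omega
        set jF : Fin n := ⟨j, hjn⟩ with hjF
        have hjFval : (jF : ℕ) = j := rfl
        have hjpos := ih j hjlt jF rfl (by omega)
        have hdisj := (hBL k).1.2 jF (by exact hjlt)
        rw [Set.disjoint_left] at hdisj
        have hCj1 : C (j + 1) = C j + (I.r jF).w := Csucc jF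
        set t := (x + min (C (j + 1)) (x + (I.r k).w)) / 2 with ht
        set u := min (I.r jF).h (I.r k).h / 2 with hu
        have hwk := I.w_pos k
        have hhk := I.h_pos k
        have hhj := I.h_pos jF
        have htgt : x < t := by
          have h1 : x < min (C (j + 1)) (x + (I.r k).w) := lt_min hnot (by linarith)
          simp only [ht]; linarith
        have htlt1 : t < C (j + 1) := by
          have := min_le_left (C (j + 1)) (x + (I.r k).w)
          simp only [ht]; linarith
        have htlt2 : t < x + (I.r k).w := by
          have := min_le_right (C (j + 1)) (x + (I.r k).w)
          simp only [ht]; linarith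
        have hupos : 0 < u := by
          have := lt_min hhj hhk
          simp only [hu]; linarith
        have humem1 : u < (I.r jF).h := by
          have := min_le_left (I.r jF).h (I.r k).h
          simp only [hu]; linarith
        have humem2 : u < (I.r k).h := by
          have := min_le_right (I.r jF).h (I.r k).h
          simp only [hu]; linarith
        have hmem1 : (t, u) ∈ openBox (I.r k) (pos k) := by
          constructor
          · exact ⟨htgt, htlt2⟩
          · rw [hy]; exact ⟨hupos, by simpa using humem2⟩
        have hmem2 : (t, u) ∈ openBox (I.r jF) (pos jF) := by
          rw [hjpos]
          constructor
          · refine ⟨lt_of_le_of_lt hPj htgt, ?_⟩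
            rw [hCj1] at htlt1; exact htlt1
          · exact ⟨hupos, by simpa using humem1⟩
        exact hdisj hmem1 hmem2
      have : (pos k).1 = C (k : ℕ) := le_antisymm hxle hxge
      exact Prod.ext_iff.mpr ⟨this, hy⟩
  -- main argument
  by_contra hcon
  push_neg at hcon
  obtain ⟨hiF, hiw⟩ := (Finset.mem_filter.mp hi).2
  push_neg at hiw
  have hiBlt : (iB : ℕ) < a := by
    have h : (iB : ℕ) < (ia : ℕ) := hiB.1.1
    omega
  have posiB := hfloor _ iB rfl hiBlt
  have hyia : (pos ia).2 = (I.r iB).h := by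
    have h2 := hiB.1.2.1
    rw [posiB] at h2
    simpa using h2.symm
  have hiFg : i ∉ I.greedyF d.σ := hiF
  obtain ⟨P, hPF, hPh, hPW⟩ := greedy_reject I d.σ d.sorted i hiFg
  set S := d.F.filter (fun f => (I.r iB).h < (I.r f).h) with hS
  have hPS : P ⊆ S := by
    intro f hf
    exact Finset.mem_filter.mpr ⟨hPF hf, lt_of_lt_of_le hcon (hPh f hf)⟩
  have hsP : (∑ f ∈ P, (I.r f).w) ≤ ∑ f ∈ S, (I.r f).w :=
    Finset.sum_le_sum_of_subset_of_nonneg hPS (fun f _ _ => (I.w_pos f).le)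
  have hsW : I.W < (I.r i).w + ∑ f ∈ S, (I.r f).w := by linarith
  have hSdc : ∀ f ∈ S, ∀ g : Fin n, (g : ℕ) ≤ (f : ℕ) → g ∈ S := by
    intro f hf g hg
    obtain ⟨hfF, hfh⟩ := Finset.mem_filter.mp hf
    have hfa : (f : ℕ) < a := (hO1 f).mp hfF
    exact Finset.mem_filter.mpr
      ⟨(hO1 g).mpr (by omega), lt_of_lt_of_le hfh (hO3 g f hg hfa)⟩
  have hSF : ∀ f ∈ S, (f : ℕ) < a := fun f hf => (hO1 f).mp (Finset.mem_filter.mp hf).1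
  have hsCa : (∑ f ∈ S, (I.r f).w) ≤ C a := by
    apply Finset.sum_le_sum_of_subset_of_nonneg
    · intro f hf
      simp only [Finset.mem_filter, Finset.mem_univ, true_and]
      exact hSF f hf
    · intro f _ _; exact (I.w_pos f).le
  have hxia : (∑ f ∈ S, (I.r f).w) ≤ (pos ia).1 := by
    by_contra hlt
    push_neg at hlt
    set x := (pos ia).1 with hxdef
    have hx0 : 0 ≤ x := (hBL ia).1.1.1
    have hxCa : x < C a := lt_of_lt_of_le hlt hsCa
    set j := Nat.findGreatest (fun m => C m ≤ x) a with hj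
    have hPj : C j ≤ x :=
      Nat.findGreatest_spec (P := fun m => C m ≤ x) (Nat.zero_le _)
        (show C 0 ≤ x by rw [C0]; exact hx0)
    have hjk : j ≤ a := Nat.findGreatest_le _
    have hjne : j ≠ a := by intro h; rw [h] at hPj; linarith
    have hjlt : j < a := lt_of_le_of_ne hjk hjne
    have hnot : ¬ C (j + 1) ≤ x :=
      Nat.findGreatest_is_greatest (P := fun m => C m ≤ x) (n := a)
        (Nat.lt_succ_of_le le_rfl) (by omega)
    push_neg at hnot
    set jF : Fin n := ⟨j, by omega⟩ with hjF
    have hjS : jF ∈ S := by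
      by_contra hjns
      have hSsub : S ⊆ Finset.univ.filter (fun f : Fin n => (f : ℕ) < j) := by
        intro f hf
        simp only [Finset.mem_filter, Finset.mem_univ, true_and]
        by_contra hge
        push_neg at hge
        exact hjns (hSdc f hf jF hge)
      have hle : (∑ f ∈ S, (I.r f).w) ≤ C j :=
        Finset.sum_le_sum_of_subset_of_nonneg hSsub (fun f _ _ => (I.w_pos f).le)
      linarith
    have hjposf := hfloor j jF rfl hjlt
    have hdisj := (hBL ia).1.2 jF (by exact (show j < (ia : ℕ) by omega))
    rw [Set.disjoint_left] at hdisj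
    have hCj1 : C (j + 1) = C j + (I.r jF).w := Csucc jF
    have hwia := I.w_pos ia
    have hhia := I.h_pos ia
    have hhj : (I.r iB).h < (I.r jF).h := (Finset.mem_filter.mp hjS).2
    set t := (x + min (C (j + 1)) (x + (I.r ia).w)) / 2 with ht
    have htgt : x < t := by
      have h1 : x < min (C (j + 1)) (x + (I.r ia).w) := lt_min hnot (by linarith)
      simp only [ht]; linarith
    have htlt1 : t < C (j + 1) := by
      have := min_le_left (C (j + 1)) (x + (I.r ia).w)
      simp only [ht]; linarith
    have htlt2 : t < x + (I.r ia).w := by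
      have := min_le_right (C (j + 1)) (x + (I.r ia).w)
      simp only [ht]; linarith
    set y := (pos ia).2 with hydef
    have hylt : y < (I.r jF).h := by rw [hyia]; exact hhj
    set u := (y + min (I.r jF).h (y + (I.r ia).h)) / 2 with hu
    have hugt : y < u := by
      have h1 : y < min (I.r jF).h (y + (I.r ia).h) := lt_min hylt (by linarith)
      simp only [hu]; linarith
    have hult1 : u < (I.r jF).h := by
      have := min_le_left (I.r jF).h (y + (I.r ia).h)
      simp only [hu]; linarith
    have hult2 : u < y + (I.r ia).h := by
      have := min_le_right (I.r jF).h (y + (I.r ia).h)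
      simp only [hu]; linarith
    have hy0 : 0 ≤ y := (hBL ia).1.1.2.2
    have hu0 : 0 < u := lt_of_le_of_lt hy0 hugt
    have hmem1 : (t, u) ∈ openBox (I.r ia) (pos ia) :=
      ⟨⟨htgt, htlt2⟩, ⟨hugt, hult2⟩⟩
    have hmem2 : (t, u) ∈ openBox (I.r jF) (pos jF) := by
      rw [hjposf]
      refine ⟨⟨lt_of_le_of_lt hPj htgt, ?_⟩, ⟨hu0, ?_⟩⟩
      · rw [hCj1] at htlt1; exact htlt1
      · simpa using hult1
    exact hdisj hmem1 hmem2
  have hstrip := (hBL ia).1.1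
  obtain ⟨hidx1, hidx2⟩ := (hO2 i).mp hi
  have hwii : (I.r i).w ≤ (I.r ia).w := hO4 ia i (le_of_eq hia.symm) (by omega) hidx2
  have hW2 := hstrip.2.1
  linarith
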